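/- Let ρ be an N'×N' density matrix. Let h_1, …, h_N be pairwise commuting N'×N' complex matrices with ‖h_j‖ ≤ 1 for all j, and set H = Σ_{j=1}^N h_j, with H Hermitian. Let P_1, …, P_{N_O} be N'×N' matrices with ‖P_i‖ ≤ 1, and set O = Σ_{i=1}^{N_O} P_i, with O Hermitian. Assume each h_j either commutes or anticommutes with each P_i, and let s := max_{1 ≤ i ≤ N_O} |{ j : h_j P_i + P_i h_j = 0 }|. Define g(θ) = exp(iθH)·O·exp(−iθH) and L(θ) = Re Tr[ρ · g(θ)]. Then for every r > 0 with 4sr ≤ 3, the variance of L under the uniform distribution on [−r, r] satisfies Var[L] ≥ (r⁴/45)·( Re Tr[ρ · g''(0)] )² − ( 32·N_O²·s⁶ / 135 )·r⁶. -/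

import Mathlib

open scoped Matrix.Norms.L2Operator
open scoped Matrix
open scoped ComplexOrder

set_option linter.unusedSectionVars false
set_option linter.unusedVariables false
set_option maxHeartbeats 2000000

local notation "⟪" x ", " y "⟫" => @inner ℂ _ _ x y

noncomputable section Stmt11Aux

/-! ### Auxiliary lemmas for `stmt11` -/

section TraceBound
variable {N' : ℕ}

lemma stmt11_entry_eq_inner (C M : Matrix (Fin N') (Fin N') ℂ) (i : Fin N') :
    (C * M * Cᴴ) i i =
      ⟪((WithLp.equiv 2 _).symm (star (C i)) : EuclideanSpace ℂ (Fin N')),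
        ((WithLp.equiv 2 _).symm (M *ᵥ star (C i)) : EuclideanSpace ℂ (Fin N'))⟫ := by
  simp only [PiLp.inner_apply, RCLike.inner_apply, WithLp.equiv_symm_apply, PiLp.toLp_apply,
    Matrix.mul_apply, Matrix.conjTranspose_apply, Matrix.mulVec, dotProduct,
    Pi.star_apply, starRingEnd_apply, star_star, Finset.sum_mul, Finset.mul_sum]
  rw [Finset.sum_comm]
  refine Finset.sum_congr rfl fun k _ => Finset.sum_congr rfl fun l _ => by ring

open scoped MatrixOrder in
lemma stmt11_psd_factor (ρ : Matrix (Fin N') (Fin N') ℂ) (hρ : ρ.PosSemidef) :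
    ∃ C : Matrix (Fin N') (Fin N') ℂ, ρ = Cᴴ * C := by
  obtain ⟨X, hX, -, hXX⟩ := CFC.exists_sqrt_of_isSelfAdjoint_of_quasispectrumRestricts
    hρ.isHermitian (QuasispectrumRestricts.nnreal_of_nonneg hρ.nonneg)
  exact ⟨X, by rw [← hXX, ← Matrix.star_eq_conjTranspose, hX.star_eq]⟩

lemma stmt11_trace_re_bound (ρ M : Matrix (Fin N') (Fin N') ℂ)
    (hρ : ρ.PosSemidef) (hρtr : ρ.trace = 1) :
    |((ρ * M).trace).re| ≤ ‖M‖ := by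
  obtain ⟨C, rfl⟩ := stmt11_psd_factor ρ hρ
  set x : Fin N' → EuclideanSpace ℂ (Fin N') :=
    fun i => (WithLp.equiv 2 _).symm (star (C i)) with hx
  have cyc : ∀ Q : Matrix (Fin N') (Fin N') ℂ, (Cᴴ * C * Q).trace = (C * Q * Cᴴ).trace := by
    intro Q
    rw [Matrix.trace_mul_cycle (A := C) (B := Q) (C := Cᴴ)]
  have key : ∀ Q : Matrix (Fin N') (Fin N') ℂ, (Cᴴ * C * Q).trace = ∑ i, ⟪x i,
      ((WithLp.equiv 2 _).symm (Q *ᵥ star (C i)) : EuclideanSpace ℂ (Fin N'))⟫ := by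
    intro Q
    rw [cyc, Matrix.trace]
    exact Finset.sum_congr rfl fun i _ => stmt11_entry_eq_inner C Q i
  have hsum : ∑ i, ‖x i‖ ^ 2 = 1 := by
    have h1 : (Cᴴ * C).trace = ∑ i, ⟪x i, x i⟫ := by
      have := key 1
      rw [mul_one] at this
      simpa only [Matrix.one_mulVec] using this
    have h2 : ∑ i, ⟪x i, x i⟫ = ((∑ i, ‖x i‖ ^ 2 : ℝ) : ℂ) := by
      push_cast
      exact Finset.sum_congr rfl fun i _ => inner_self_eq_norm_sq_to_K (𝕜 := ℂ) (x i)
    rw [h1, h2] at hρtr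
    exact_mod_cast hρtr
  calc |((Cᴴ * C * M).trace).re| ≤ ‖((Cᴴ * C * M).trace)‖ :=
        Complex.abs_re_le_norm _
    _ ≤ ∑ i, ‖(⟪x i,
        ((WithLp.equiv 2 _).symm (M *ᵥ star (C i)) : EuclideanSpace ℂ (Fin N'))⟫)‖ := by
        rw [key M]; exact norm_sum_le _ _
    _ ≤ ∑ i, ‖M‖ * ‖x i‖ ^ 2 := by
        apply Finset.sum_le_sum
        intro i _
        have h1 : ‖(⟪x i,
            ((WithLp.equiv 2 _).symm (M *ᵥ star (C i)) : EuclideanSpace ℂ (Fin N'))⟫)‖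
            ≤ ‖x i‖ * ‖((WithLp.equiv 2 _).symm (M *ᵥ star (C i)) : EuclideanSpace ℂ (Fin N'))‖ :=
          by simpa using norm_inner_le_norm (𝕜 := ℂ) (x i) ((WithLp.equiv 2 _).symm (M *ᵥ star (C i)) : EuclideanSpace ℂ (Fin N'))
        have h2 : ‖((WithLp.equiv 2 _).symm (M *ᵥ star (C i)) : EuclideanSpace ℂ (Fin N'))‖
            ≤ ‖M‖ * ‖x i‖ := Matrix.l2_opNorm_mulVec M (x i)
        nlinarith [norm_nonneg (x i), norm_nonneg M]
    _ = ‖M‖ := by rw [← Finset.mul_sum, hsum, mul_one]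

end TraceBound

section Deriv
variable {N' : ℕ} [NeZero N'] (B : Matrix (Fin N') (Fin N') ℂ)

lemma stmt11_hasDerivAt_U (θ : ℝ) :
    HasDerivAt (fun t : ℝ => NormedSpace.exp ((t : ℂ) • B))
      (NormedSpace.exp ((θ : ℂ) • B) * B) θ := by
  have h1 := hasDerivAt_exp_smul_const (𝕂 := ℂ) B (θ : ℂ)
  have h2 : HasDerivAt (fun t : ℝ => (t : ℂ)) 1 θ := Complex.ofRealCLM.hasDerivAt
  have := h1.scomp θ h2
  simpa [Function.comp_def] using this

lemma stmt11_hasDerivAt_V (θ : ℝ) :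
    HasDerivAt (fun t : ℝ => NormedSpace.exp (((-t : ℝ) : ℂ) • B))
      (-(NormedSpace.exp (((-θ : ℝ) : ℂ) • B) * B)) θ := by
  have h1 := hasDerivAt_exp_smul_const (𝕂 := ℂ) B ((-θ : ℝ) : ℂ)
  have h2 : HasDerivAt (fun t : ℝ => ((-t : ℝ) : ℂ)) (-1) θ := by
    simpa using (hasDerivAt_id θ).neg.ofReal_comp
  have := h1.scomp θ h2
  simpa [Function.comp_def] using this

lemma stmt11_B_comm_exp (c : ℂ) :
    B * NormedSpace.exp (c • B) = NormedSpace.exp (c • B) * B :=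
  ((Commute.refl B).smul_right c).exp_right |>.eq

lemma stmt11_hasDerivAt_conj (X : Matrix (Fin N') (Fin N') ℂ) (θ : ℝ) :
    HasDerivAt
      (fun t : ℝ => NormedSpace.exp ((t : ℂ) • B) * X * NormedSpace.exp (((-t : ℝ) : ℂ) • B))
      (NormedSpace.exp ((θ : ℂ) • B) * (B * X - X * B) *
        NormedSpace.exp (((-θ : ℝ) : ℂ) • B)) θ := by
  have h := ((stmt11_hasDerivAt_U B θ).mul_const X).mul (stmt11_hasDerivAt_V B θ)
  refine h.congr_deriv ?_
  symm
  have h1 := stmt11_B_comm_exp B (((-θ : ℝ) : ℂ))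
  set U := NormedSpace.exp ((θ : ℂ) • B)
  set V := NormedSpace.exp (((-θ : ℝ) : ℂ) • B)
  calc U * (B * X - X * B) * V = (U * B) * X * V - U * X * (B * V) := by noncomm_ring
    _ = U * B * X * V + U * X * -(V * B) := by rw [h1]; noncomm_ring

lemma stmt11_matrix_nontrivial : Nontrivial (Matrix (Fin N') (Fin N') ℂ) := by
  haveI : Nonempty (Fin N') := Fin.pos_iff_nonempty.mp (Nat.pos_of_ne_zero (NeZero.ne N'))
  infer_instance

lemma stmt11_exp_skew_norm (hB : star B = -B) (c : ℝ) :
    ‖NormedSpace.exp (((c : ℝ) : ℂ) • B)‖ = 1 := by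
  haveI := stmt11_matrix_nontrivial (N' := N')
  have hmem : ((c : ℝ) : ℂ) • B ∈ skewAdjoint (Matrix (Fin N') (Fin N') ℂ) := by
    rw [skewAdjoint.mem_iff, star_smul, hB]
    simp [Complex.star_def, Complex.conj_ofReal, smul_neg]
  let +nondep : NormedAlgebra ℚ (Matrix (Fin N') (Fin N') ℂ) := .restrictScalars ℚ ℂ _
  have := NormedSpace.exp_mem_unitary_of_mem_skewAdjoint hmem
  exact CStarRing.norm_coe_unitary ⟨_, this⟩

lemma stmt11_norm_conj_le (hB : star B = -B) (X : Matrix (Fin N') (Fin N') ℂ) (θ : ℝ) :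
    ‖NormedSpace.exp ((θ : ℂ) • B) * X * NormedSpace.exp (((-θ : ℝ) : ℂ) • B)‖ ≤ ‖X‖ := by
  calc ‖NormedSpace.exp ((θ : ℂ) • B) * X * NormedSpace.exp (((-θ : ℝ) : ℂ) • B)‖
      ≤ ‖NormedSpace.exp ((θ : ℂ) • B) * X‖ * ‖NormedSpace.exp (((-θ : ℝ) : ℂ) • B)‖ :=
        norm_mul_le _ _
    _ ≤ ‖NormedSpace.exp ((θ : ℂ) • B)‖ * ‖X‖ * ‖NormedSpace.exp (((-θ : ℝ) : ℂ) • B)‖ := by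
        gcongr; exact norm_mul_le _ _
    _ ≤ ‖X‖ := by
        rw [show ((θ : ℂ)) = (((θ : ℝ)) : ℂ) from rfl, stmt11_exp_skew_norm B hB θ,
          stmt11_exp_skew_norm B hB (-θ)]
        simp

end Deriv

lemma stmt11_taylor_pos (r C : ℝ) (hC : 0 ≤ C) : ∀ (n : ℕ) (f : ℕ → ℝ → ℝ),
    (∀ k < n, ∀ t, HasDerivAt (f k) (f (k + 1) t) t) →
    (∀ k < n, f k 0 = 0) →
    Continuous (f n) →
    (∀ t, |t| ≤ r → |f n t| ≤ C) →
    ∀ t, 0 ≤ t → t ≤ r → |f 0 t| ≤ C * t ^ n / n.factorial := by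
  intro n
  induction n with
  | zero =>
    intro f _ _ _ hb t ht0 htr
    simpa using hb t (by rw [abs_of_nonneg ht0]; exact htr)
  | succ n IH =>
    intro f hd h0 hcont hb t ht0 htr
    have IH1 := IH (fun k => f (k + 1)) (fun k hk => hd (k + 1) (by omega))
      (fun k hk => h0 (k + 1) (by omega)) hcont hb
    have cont1 : Continuous (f 1) := by
      cases n with
      | zero => exact hcont
      | succ m => exact continuous_iff_continuousAt.mpr fun t => (hd 1 (by omega) t).continuousAt
    have ftc : ∫ u in (0:ℝ)..t, f 1 u = f 0 t - f 0 0 :=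
      intervalIntegral.integral_eq_sub_of_hasDerivAt (fun x _ => hd 0 (by omega) x)
        (cont1.intervalIntegrable 0 t)
    have h00 : f 0 0 = 0 := h0 0 (by omega)
    have key : |f 0 t| = |∫ u in (0:ℝ)..t, f 1 u| := by rw [ftc, h00, sub_zero]
    rw [key]
    have hfac : (0:ℝ) < n.factorial := by exact_mod_cast n.factorial_pos
    calc |∫ u in (0:ℝ)..t, f 1 u| ≤ ∫ u in (0:ℝ)..t, |f 1 u| :=
          intervalIntegral.abs_integral_le_integral_abs ht0
      _ ≤ ∫ u in (0:ℝ)..t, C / n.factorial * u ^ n := by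
          apply intervalIntegral.integral_mono_on ht0
          · exact (cont1.abs).intervalIntegrable 0 t
          · exact ((continuous_const.mul (continuous_pow n))).intervalIntegrable 0 t
          · intro u hu
            have := IH1 u hu.1 (hu.2.trans htr)
            calc |f 1 u| ≤ C * u ^ n / n.factorial := this
              _ = C / n.factorial * u ^ n := by ring
      _ = C / n.factorial * (t ^ (n + 1) / (n + 1)) := by
          rw [intervalIntegral.integral_const_mul, integral_pow]
          ring
      _ = C * t ^ (n + 1) / (n + 1).factorial := by
          have hfac2 : ((n + 1).factorial : ℝ) = (n + 1) * n.factorial := by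
            rw [Nat.factorial_succ]; push_cast; ring
          rw [hfac2, div_mul_div_comm, mul_comm ((n.factorial : ℝ)) ((n : ℝ) + 1)]

lemma stmt11_taylor_sym (r C : ℝ) (hC : 0 ≤ C) (n : ℕ) (f : ℕ → ℝ → ℝ)
    (hd : ∀ k < n, ∀ t, HasDerivAt (f k) (f (k + 1) t) t)
    (h0 : ∀ k < n, f k 0 = 0)
    (hcont : Continuous (f n))
    (hb : ∀ t, |t| ≤ r → |f n t| ≤ C) :
    ∀ t, |t| ≤ r → |f 0 t| ≤ C * |t| ^ n / n.factorial := by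
  intro t htr
  rcases le_or_gt 0 t with ht | ht
  · rw [abs_of_nonneg ht]
    exact stmt11_taylor_pos r C hC n f hd h0 hcont hb t ht ((abs_of_nonneg ht) ▸ htr)
  · set g : ℕ → ℝ → ℝ := fun k u => (-1) ^ k * f k (-u) with hg
    have hd' : ∀ k < n, ∀ u, HasDerivAt (g k) (g (k + 1) u) u := by
      intro k hk u
      have h1 : HasDerivAt (fun u : ℝ => f k (-u)) (f (k + 1) (-u) * (-1)) u :=
        (hd k hk (-u)).comp u (hasDerivAt_neg u)
      have h2 := h1.const_mul ((-1 : ℝ) ^ k)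
      refine h2.congr_deriv ?_
      show (-1:ℝ)^k * (f (k+1) (-u) * (-1)) = (-1:ℝ)^(k+1) * f (k+1) (-u)
      ring
    have h0' : ∀ k < n, g k 0 = 0 := by
      intro k hk; simp [hg, h0 k hk]
    have hcont' : Continuous (g n) :=
      continuous_const.mul (hcont.comp continuous_neg)
    have hb' : ∀ u, |u| ≤ r → |g n u| ≤ C := by
      intro u hu
      have : |g n u| = |f n (-u)| := by
        simp [hg, abs_mul, abs_pow]
      rw [this]
      exact hb (-u) (by rwa [abs_neg])
    have := stmt11_taylor_pos r C hC n g hd' h0' hcont' hb' (-t) (by linarith) (by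
      have := abs_le.mp htr; linarith)
    have h4 : |f 0 t| ≤ C * (-t) ^ n / n.factorial := by
      have h3 : g 0 (-t) = f 0 t := by simp [hg]
      rwa [h3] at this
    rw [abs_of_neg ht]
    exact h4

section Comm
variable {N' N NO : ℕ}

lemma stmt11_ad_pow_bound
    (h : Fin N → Matrix (Fin N') (Fin N') ℂ)
    (hcomm : ∀ i j, h i * h j = h j * h i)
    (hnorm : ∀ j, ‖h j‖ ≤ 1)
    (H : Matrix (Fin N') (Fin N') ℂ) (hHdef : H = ∑ j, h j)
    (P : Fin NO → Matrix (Fin N') (Fin N') ℂ) (hPnorm : ∀ i, ‖P i‖ ≤ 1)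
    (O : Matrix (Fin N') (Fin N') ℂ) (hOdef : O = ∑ i, P i)
    (hca : ∀ j i, h j * P i = P i * h j ∨ h j * P i = -(P i * h j))
    (s : ℕ)
    (hs : s = Finset.univ.sup fun i : Fin NO =>
      Set.ncard {j : Fin N | h j * P i + P i * h j = 0}) :
    ∀ k, ‖(fun X => (Complex.I • H) * X - X * (Complex.I • H))^[k] O‖
      ≤ NO * (2 * s) ^ k := by
  classical
  set B : Matrix (Fin N') (Fin N') ℂ := Complex.I • H with hB
  set ad : Matrix (Fin N') (Fin N') ℂ → Matrix (Fin N') (Fin N') ℂ :=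
    fun X => B * X - X * B with had
  have ad_smul : ∀ (c : ℂ) X, ad (c • X) = c • ad X := by
    intro c X; simp only [had, mul_smul_comm, smul_mul_assoc, smul_sub]
  have per_i : ∀ (i : Fin NO) (k : ℕ), ‖ad^[k] (P i)‖ ≤ (2 * s : ℝ) ^ k := by
    intro i k
    set S : Finset (Fin N) := Finset.univ.filter (fun j => h j * P i + P i * h j = 0) with hS
    set A : Matrix (Fin N') (Fin N') ℂ := ∑ j ∈ S, h j with hA
    have hcard : (S.card : ℝ) ≤ s := by
      have h1 : {j : Fin N | h j * P i + P i * h j = 0}.ncard = S.card := by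
        rw [Set.ncard_eq_toFinset_card']
        congr 1
        ext j
        simp [hS]
      have h2 : {j : Fin N | h j * P i + P i * h j = 0}.ncard ≤ s := by
        rw [hs]
        exact Finset.le_sup (f := fun i : Fin NO =>
          Set.ncard {j : Fin N | h j * P i + P i * h j = 0}) (Finset.mem_univ i)
      rw [h1] at h2
      exact_mod_cast h2
    have hAnorm : ‖A‖ ≤ (s : ℝ) := by
      calc ‖A‖ ≤ ∑ j ∈ S, ‖h j‖ := norm_sum_le _ _
        _ ≤ ∑ _j ∈ S, (1 : ℝ) := Finset.sum_le_sum fun j _ => hnorm j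
        _ = S.card := by simp
        _ ≤ s := hcard
    have hHA : Commute H A := by
      rw [hHdef, hA]
      exact Commute.sum_left _ _ _ fun j _ =>
        Commute.sum_right _ _ _ fun j' _ => hcomm j j'
    have hBA : Commute B A := hHA.smul_left Complex.I
    have hBP : B * P i - P i * B = (2 * Complex.I) • (A * P i) := by
      have hHP : H * P i - P i * H = (2 : ℂ) • (A * P i) := by
        rw [hHdef, Finset.sum_mul, Finset.mul_sum, ← Finset.sum_sub_distrib]
        have hzero : ∀ j ∈ Finset.univ, j ∉ S → h j * P i - P i * h j = 0 := by
          intro j _ hj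
          rcases hca j i with hc | hac
          · rw [hc, sub_self]
          · exfalso
            apply hj
            simp only [hS, Finset.mem_filter, Finset.mem_univ, true_and]
            rw [hac, neg_add_cancel]
        rw [← Finset.sum_subset (Finset.subset_univ S) hzero]
        rw [hA, Finset.sum_mul, Finset.smul_sum]
        apply Finset.sum_congr rfl
        intro j hj
        have hmem : h j * P i + P i * h j = 0 := by
          simpa [hS] using hj
        have heq : P i * h j = -(h j * P i) := eq_neg_of_add_eq_zero_right hmem
        rw [heq, sub_neg_eq_add, two_smul]
      calc B * P i - P i * B = Complex.I • (H * P i - P i * H) := by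
            simp only [hB, smul_mul_assoc, mul_smul_comm, smul_sub]
        _ = (2 * Complex.I) • (A * P i) := by rw [hHP, smul_smul, mul_comm]
    have key : ∀ k, ad^[k] (P i) = ((2 * Complex.I) ^ k) • (A ^ k * P i) := by
      intro k
      induction k with
      | zero => simp
      | succ k ih =>
        rw [Function.iterate_succ_apply', ih, ad_smul]
        have step : ad (A ^ k * P i) = (2 * Complex.I) • (A ^ (k + 1) * P i) := by
          have hBAk : B * A ^ k = A ^ k * B := (hBA.pow_right k).eq
          calc ad (A ^ k * P i) = B * (A ^ k * P i) - (A ^ k * P i) * B := rfl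
            _ = A ^ k * (B * P i - P i * B) := by rw [← mul_assoc, hBAk]; noncomm_ring
            _ = A ^ k * ((2 * Complex.I) • (A * P i)) := by rw [hBP]
            _ = (2 * Complex.I) • (A ^ (k + 1) * P i) := by
                rw [mul_smul_comm, pow_succ, mul_assoc]
        rw [step, smul_smul, ← pow_succ]
    rw [key k, norm_smul]
    have hnormc : ‖(2 * Complex.I) ^ k‖ = 2 ^ k := by
      rw [norm_pow]
      simp
    rw [hnormc]
    have hAk : ‖A ^ k * P i‖ ≤ (s : ℝ) ^ k := by
      rcases Nat.eq_zero_or_pos k with hk | hk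
      · subst hk; simpa using hPnorm i
      · calc ‖A ^ k * P i‖ ≤ ‖A ^ k‖ * ‖P i‖ := norm_mul_le _ _
          _ ≤ ‖A‖ ^ k * 1 := by
              apply mul_le_mul (norm_pow_le' A hk) (hPnorm i) (norm_nonneg _)
                (pow_nonneg (norm_nonneg _) k)
          _ ≤ (s : ℝ) ^ k := by
              rw [mul_one]
              exact pow_le_pow_left₀ (norm_nonneg _) hAnorm k
    calc (2 : ℝ) ^ k * ‖A ^ k * P i‖ ≤ 2 ^ k * (s : ℝ) ^ k := by
          apply mul_le_mul_of_nonneg_left hAk (by positivity)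
      _ = (2 * s : ℝ) ^ k := by rw [mul_pow]
  intro k
  have hsum : ad^[k] O = ∑ i, ad^[k] (P i) := by
    rw [hOdef]
    induction k with
    | zero => simp
    | succ k ih =>
      rw [Function.iterate_succ_apply', ih, had]
      simp only [Finset.sum_mul, Finset.mul_sum, ← Finset.sum_sub_distrib]
      exact Finset.sum_congr rfl fun i _ => by rw [Function.iterate_succ_apply']
  rw [hsum]
  calc ‖∑ i, ad^[k] (P i)‖ ≤ ∑ i : Fin NO, ‖ad^[k] (P i)‖ := norm_sum_le _ _
    _ ≤ ∑ _i : Fin NO, (2 * s : ℝ) ^ k := Finset.sum_le_sum fun i _ => per_i i k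
    _ = NO * (2 * s : ℝ) ^ k := by simp [Finset.sum_const]

end Comm

lemma stmt11_var_lower (r : ℝ) (hr : 0 < r) (f φ : ℝ → ℝ)
    (hf : Continuous f) (hφ : Continuous φ)
    (hφ0 : ∫ θ in (-r)..r, φ θ = 0) (hd : 0 < ∫ θ in (-r)..r, (φ θ) ^ 2) :
    (1 / (2 * r)) * (∫ θ in (-r)..r, (f θ) ^ 2) - ((1 / (2 * r)) * ∫ θ in (-r)..r, f θ) ^ 2
      ≥ (∫ θ in (-r)..r, f θ * φ θ) ^ 2 / (2 * r * ∫ θ in (-r)..r, (φ θ) ^ 2) := by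
  set a := ∫ θ in (-r)..r, f θ with ha
  set b := ∫ θ in (-r)..r, (f θ) ^ 2 with hb
  set c := ∫ θ in (-r)..r, f θ * φ θ with hc
  set d := ∫ θ in (-r)..r, (φ θ) ^ 2 with hdd
  set μ := a / (2 * r) with hμ
  set lam := c / d with hlam
  have hrr : (-r) ≤ r := by linarith
  have i1 : IntervalIntegrable (fun θ => (f θ) ^ 2) MeasureTheory.volume (-r) r :=
    (hf.pow 2).intervalIntegrable _ _
  have i2 : IntervalIntegrable f MeasureTheory.volume (-r) r := hf.intervalIntegrable _ _
  have i3 : IntervalIntegrable (fun θ => f θ * φ θ) MeasureTheory.volume (-r) r :=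
    (hf.mul hφ).intervalIntegrable _ _
  have i4 : IntervalIntegrable (fun θ => (φ θ) ^ 2) MeasureTheory.volume (-r) r :=
    (hφ.pow 2).intervalIntegrable _ _
  have i5 : IntervalIntegrable φ MeasureTheory.volume (-r) r := hφ.intervalIntegrable _ _
  have key : (0:ℝ) ≤ ∫ θ in (-r)..r, (f θ - μ - lam * φ θ) ^ 2 :=
    intervalIntegral.integral_nonneg hrr (fun u _ => sq_nonneg _)
  have expand : (∫ θ in (-r)..r, (f θ - μ - lam * φ θ) ^ 2)
      = b + (μ ^ 2 + lam ^ 2 * 0) * (2*r) - μ ^2 *(2*r) - lam ^2 * 0 - 2*μ*a - 2*lam*c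
        + 2*μ*lam*0 + μ^2*(2*r) + lam^2*d := by
    have e1 : ∀ θ, (f θ - μ - lam * φ θ) ^ 2
        = ((f θ) ^ 2 - (2*μ) * f θ) - ((2*lam) * (f θ * φ θ) - ((2*μ*lam) * φ θ
          + (μ ^ 2 + lam ^ 2 * (φ θ)^2))) := fun θ => by ring
    rw [intervalIntegral.integral_congr (g := fun θ => ((f θ) ^ 2 - (2*μ) * f θ)
      - ((2*lam) * (f θ * φ θ) - ((2*μ*lam) * φ θ + (μ ^ 2 + lam ^ 2 * (φ θ)^2))))
      (fun θ _ => e1 θ)]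
    rw [intervalIntegral.integral_sub (i1.sub (i2.const_mul _))
      ((i3.const_mul _).sub ((i5.const_mul _).add
        (IntervalIntegrable.add (intervalIntegrable_const) (i4.const_mul _))))]
    rw [intervalIntegral.integral_sub i1 (i2.const_mul _),
      intervalIntegral.integral_sub (i3.const_mul _)
        ((i5.const_mul _).add (IntervalIntegrable.add intervalIntegrable_const (i4.const_mul _))),
      intervalIntegral.integral_add (i5.const_mul _)
        (IntervalIntegrable.add intervalIntegrable_const (i4.const_mul _)),
      intervalIntegral.integral_add intervalIntegrable_const (i4.const_mul _),
      intervalIntegral.integral_const_mul, intervalIntegral.integral_const_mul,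
      intervalIntegral.integral_const_mul, intervalIntegral.integral_const_mul,
      intervalIntegral.integral_const, hφ0]
    simp only [← ha, ← hb, ← hc, ← hdd, smul_eq_mul]
    ring
  have key2 : (0:ℝ) ≤ b - 2*μ*a - 2*lam*c + μ^2*(2*r) + lam^2*d := by
    rw [expand] at key; linarith [key]
  have hfin : 0 ≤ b - a^2/(2*r) - c^2/d := by
    have h1 : 2*μ*a = a^2/r := by rw [hμ]; field_simp
    have h2 : μ^2*(2*r) = a^2/(2*r) := by rw [hμ]; field_simp
    have h3 : 2*lam*c = 2*c^2/d := by rw [hlam]; field_simp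
    have h4 : lam^2*d = c^2/d := by rw [hlam]; field_simp
    rw [h1, h2, h3, h4] at key2
    have heq : a^2/(2*r) + a^2/(2*r) = a^2/r := by
      field_simp
      ring
    have heq2 : 2*c^2/d = c^2/d + c^2/d := by ring
    linarith [key2, heq, heq2]
  rw [ge_iff_le, div_le_iff₀ (by positivity)]
  have hb2 : c^2/d ≤ b - a^2/(2*r) := by linarith
  have hthis := mul_le_mul_of_nonneg_right hb2 (le_of_lt (show (0:ℝ) < d from hd))
  rw [div_mul_cancel₀ _ (ne_of_gt hd)] at hthis
  calc c ^ 2 ≤ (b - a^2/(2*r)) * d := hthis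
    _ = (1/(2*r) * b - (1/(2*r)*a)^2) * (2*r*d) := by field_simp

def stmt11_quintic (a0 a1 a2 a3 a4 a5 : ℝ) : ℝ → ℝ :=
  fun θ => a0 + a1*θ + a2*θ^2 + a3*θ^3 + a4*θ^4 + a5*θ^5

lemma stmt11_quintic_hasDerivAt (a0 a1 a2 a3 a4 a5 t : ℝ) :
    HasDerivAt (stmt11_quintic a0 a1 a2 a3 a4 a5)
      (stmt11_quintic a1 (2*a2) (3*a3) (4*a4) (5*a5) 0 t) t := by
  have h : HasDerivAt (stmt11_quintic a0 a1 a2 a3 a4 a5)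
      (0 + a1*1 + a2*(2*t^1) + a3*(3*t^2) + a4*(4*t^3) + a5*(5*t^4)) t := by
    unfold stmt11_quintic
    exact ((((((hasDerivAt_const t a0).add ((hasDerivAt_id t).const_mul a1)).add
      ((hasDerivAt_pow 2 t).const_mul a2)).add ((hasDerivAt_pow 3 t).const_mul a3)).add
      ((hasDerivAt_pow 4 t).const_mul a4)).add ((hasDerivAt_pow 5 t).const_mul a5))
  convert h using 1
  unfold stmt11_quintic
  ring

lemma stmt11_quintic_continuous (a0 a1 a2 a3 a4 a5 : ℝ) :
    Continuous (stmt11_quintic a0 a1 a2 a3 a4 a5) := by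
  unfold stmt11_quintic
  continuity

def stmt11_pp (c0 c1 c2 c3 c4 c5 : ℝ) : ℕ → ℝ → ℝ
  | 0 => stmt11_quintic c0 c1 (c2/2) (c3/6) (c4/24) (c5/120)
  | 1 => stmt11_quintic c1 c2 (c3/2) (c4/6) (c5/24) 0
  | 2 => stmt11_quintic c2 c3 (c4/2) (c5/6) 0 0
  | 3 => stmt11_quintic c3 c4 (c5/2) 0 0 0
  | 4 => stmt11_quintic c4 c5 0 0 0 0
  | 5 => stmt11_quintic c5 0 0 0 0 0
  | _ => stmt11_quintic 0 0 0 0 0 0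

lemma stmt11_pp_hasDerivAt (c0 c1 c2 c3 c4 c5 : ℝ) (k : ℕ) (hk : k < 6) (t : ℝ) :
    HasDerivAt (stmt11_pp c0 c1 c2 c3 c4 c5 k) (stmt11_pp c0 c1 c2 c3 c4 c5 (k+1) t) t := by
  interval_cases k
  · have := stmt11_quintic_hasDerivAt c0 c1 (c2/2) (c3/6) (c4/24) (c5/120) t
    show HasDerivAt (stmt11_quintic c0 c1 (c2/2) (c3/6) (c4/24) (c5/120)) _ t
    convert this using 1
    show stmt11_quintic c1 c2 (c3/2) (c4/6) (c5/24) 0 t = _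
    unfold stmt11_quintic; ring
  · have := stmt11_quintic_hasDerivAt c1 c2 (c3/2) (c4/6) (c5/24) 0 t
    show HasDerivAt (stmt11_quintic c1 c2 (c3/2) (c4/6) (c5/24) 0) _ t
    convert this using 1
    show stmt11_quintic c2 c3 (c4/2) (c5/6) 0 0 t = _
    unfold stmt11_quintic; ring
  · have := stmt11_quintic_hasDerivAt c2 c3 (c4/2) (c5/6) 0 0 t
    show HasDerivAt (stmt11_quintic c2 c3 (c4/2) (c5/6) 0 0) _ t
    convert this using 1
    show stmt11_quintic c3 c4 (c5/2) 0 0 0 t = _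
    unfold stmt11_quintic; ring
  · have := stmt11_quintic_hasDerivAt c3 c4 (c5/2) 0 0 0 t
    show HasDerivAt (stmt11_quintic c3 c4 (c5/2) 0 0 0) _ t
    convert this using 1
    show stmt11_quintic c4 c5 0 0 0 0 t = _
    unfold stmt11_quintic; ring
  · have := stmt11_quintic_hasDerivAt c4 c5 0 0 0 0 t
    show HasDerivAt (stmt11_quintic c4 c5 0 0 0 0) _ t
    convert this using 1
    show stmt11_quintic c5 0 0 0 0 0 t = _
    unfold stmt11_quintic; ring
  · have := stmt11_quintic_hasDerivAt c5 0 0 0 0 0 t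
    show HasDerivAt (stmt11_quintic c5 0 0 0 0 0) _ t
    convert this using 1
    show stmt11_quintic 0 0 0 0 0 0 t = _
    unfold stmt11_quintic; ring

lemma stmt11_integral_poly8 (a0 a1 a2 a3 a4 a5 a6 a7 a8 r : ℝ) :
    (∫ θ in (-r)..r,
      (a0 + a1*θ^1 + a2*θ^2 + a3*θ^3 + a4*θ^4 + a5*θ^5 + a6*θ^6 + a7*θ^7 + a8*θ^8))
      = 2*a0*r + 2*a2*r^3/3 + 2*a4*r^5/5 + 2*a6*r^7/7 + 2*a8*r^9/9 := by
  have ii : ∀ (c : ℝ) (n : ℕ), IntervalIntegrable (fun θ : ℝ => c * θ^n)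
      MeasureTheory.volume (-r) r :=
    fun c n => (continuous_const.mul (continuous_pow n)).intervalIntegrable _ _
  have ic : IntervalIntegrable (fun _ : ℝ => a0) MeasureTheory.volume (-r) r :=
    intervalIntegrable_const
  have key : ∀ (c : ℝ) (n : ℕ), (∫ θ in (-r)..r, c * θ^n)
      = c * ((r^(n+1) - (-r)^(n+1))/(n+1)) := by
    intro c n
    rw [intervalIntegral.integral_const_mul, integral_pow]
  rw [intervalIntegral.integral_add (((((((ic.add (ii a1 1)).add (ii a2 2)).add (ii a3 3)).add
        (ii a4 4)).add (ii a5 5)).add (ii a6 6)).add (ii a7 7)) (ii a8 8),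
      intervalIntegral.integral_add ((((((ic.add (ii a1 1)).add (ii a2 2)).add (ii a3 3)).add
        (ii a4 4)).add (ii a5 5)).add (ii a6 6)) (ii a7 7),
      intervalIntegral.integral_add (((((ic.add (ii a1 1)).add (ii a2 2)).add (ii a3 3)).add
        (ii a4 4)).add (ii a5 5)) (ii a6 6),
      intervalIntegral.integral_add ((((ic.add (ii a1 1)).add (ii a2 2)).add (ii a3 3)).add
        (ii a4 4)) (ii a5 5),
      intervalIntegral.integral_add (((ic.add (ii a1 1)).add (ii a2 2)).add (ii a3 3)) (ii a4 4),
      intervalIntegral.integral_add ((ic.add (ii a1 1)).add (ii a2 2)) (ii a3 3),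
      intervalIntegral.integral_add (ic.add (ii a1 1)) (ii a2 2),
      intervalIntegral.integral_add ic (ii a1 1),
      intervalIntegral.integral_const,
      key a1 1, key a2 2, key a3 3, key a4 4, key a5 5, key a6 6, key a7 7, key a8 8]
  have hneg : ∀ n : ℕ, (-r)^n = (-1)^n * r^n := fun n => by rw [neg_pow]
  rw [hneg 2, hneg 3, hneg 4, hneg 5, hneg 6, hneg 7, hneg 8, hneg 9]
  norm_num
  ring

end Stmt11Aux


/-- Variance lower bound for a single-generator channel under locality
assumptions: `H = Σ_j h_j` with pairwise-commuting normalized terms, `O = Σ_i P_i` with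
normalized terms, each `h_j` commuting or anticommuting with each `P_i`, and
`s = max_i #{j : h_j anticommutes with P_i}`.  With `g(θ) = exp(iθH)·O·exp(−iθH)` and
`L(θ) = Re Tr[ρ·g(θ)]`, whenever `4sr ≤ 3` the variance of `L` on the uniform
distribution over `[−r, r]` is at least
`(r⁴/45)(Re Tr[ρ·g''(0)])² − (32·N_O²·s⁶/135)·r⁶`. -/
theorem stmt11 {N' N NO : ℕ} [NeZero N']
    (ρ : Matrix (Fin N') (Fin N') ℂ) (hρ : ρ.PosSemidef) (hρtr : ρ.trace = 1)
    (h : Fin N → Matrix (Fin N') (Fin N') ℂ)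
    (hcomm : ∀ i j, h i * h j = h j * h i)
    (hnorm : ∀ j, ‖h j‖ ≤ 1)
    (H : Matrix (Fin N') (Fin N') ℂ) (hHdef : H = ∑ j, h j) (hH : H.IsHermitian)
    (P : Fin NO → Matrix (Fin N') (Fin N') ℂ) (hPnorm : ∀ i, ‖P i‖ ≤ 1)
    (O : Matrix (Fin N') (Fin N') ℂ) (hOdef : O = ∑ i, P i) (hO : O.IsHermitian)
    (hca : ∀ j i, h j * P i = P i * h j ∨ h j * P i = -(P i * h j))
    (s : ℕ)
    (hs : s = Finset.univ.sup fun i : Fin NO =>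
      Set.ncard {j : Fin N | h j * P i + P i * h j = 0})
    (g : ℝ → Matrix (Fin N') (Fin N') ℂ)
    (hg : ∀ θ : ℝ, g θ = NormedSpace.exp ((Complex.I * (θ : ℂ)) • H) * O *
        NormedSpace.exp ((-(Complex.I * (θ : ℂ))) • H))
    (L : ℝ → ℝ) (hL : ∀ θ, L θ = ((ρ * g θ).trace).re)
    (r : ℝ) (hr : 0 < r) (hrs : 4 * (s : ℝ) * r ≤ 3) :
    (1 / (2 * r)) * (∫ θ in (-r)..r, (L θ) ^ 2) -
        ((1 / (2 * r)) * ∫ θ in (-r)..r, L θ) ^ 2 ≥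
      (r ^ 4 / 45) * (((ρ * iteratedDeriv 2 g 0).trace).re) ^ 2 -
        (32 * (NO : ℝ) ^ 2 * (s : ℝ) ^ 6 / 135) * r ^ 6 := by
  classical
  set B : Matrix (Fin N') (Fin N') ℂ := Complex.I • H with hB
  have hBstar : star B = -B := by
    rw [hB, star_smul, Matrix.star_eq_conjTranspose, hH.eq]
    simp [Complex.star_def, Complex.conj_I, neg_smul]
  set U : ℝ → Matrix (Fin N') (Fin N') ℂ :=
    fun θ => NormedSpace.exp ((θ : ℂ) • B) with hU
  set V : ℝ → Matrix (Fin N') (Fin N') ℂ :=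
    fun θ => NormedSpace.exp (((-θ : ℝ) : ℂ) • B) with hV
  have hgUV : ∀ θ : ℝ, g θ = U θ * O * V θ := by
    intro θ
    rw [hg θ, hU, hV]
    have e1 : (Complex.I * (θ:ℂ)) • H = (θ:ℂ) • B := by
      rw [hB, smul_smul]; congr 1; ring
    have e2 : (-(Complex.I * (θ:ℂ))) • H = ((-θ : ℝ) : ℂ) • B := by
      rw [hB, smul_smul]; congr 1; push_cast; ring
    rw [e1, e2]
  set Dk : ℕ → Matrix (Fin N') (Fin N') ℂ :=
    fun k => (fun X => B * X - X * B)^[k] O with hDk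
  set G : ℕ → ℝ → Matrix (Fin N') (Fin N') ℂ := fun k θ => U θ * Dk k * V θ with hG
  have hDsucc : ∀ k, Dk (k+1) = B * Dk k - Dk k * B := by
    intro k; rw [hDk]; exact Function.iterate_succ_apply' _ _ _
  have hGd : ∀ k θ, HasDerivAt (G k) (G (k+1) θ) θ := by
    intro k θ
    have hder := stmt11_hasDerivAt_conj B (Dk k) θ
    simp only [hG]
    rw [hDsucc k]
    exact hder
  have hTd : ∀ (f : ℝ → Matrix (Fin N') (Fin N') ℂ) (f' : Matrix (Fin N') (Fin N') ℂ) (θ : ℝ),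
      HasDerivAt f f' θ →
      HasDerivAt (fun t => ((ρ * f t).trace).re) (((ρ * f').trace).re) θ := by
    intro f f' θ hf
    have h1 : HasDerivAt (fun t => ρ * f t) (ρ * f') θ := hf.const_mul ρ
    have h2 := (((Matrix.traceLinearMap (Fin N') ℂ ℂ).toContinuousLinearMap).restrictScalars
        ℝ).hasFDerivAt.comp_hasDerivAt θ h1
    have h3 := Complex.reCLM.hasFDerivAt.comp_hasDerivAt θ h2
    exact h3
  set Lk : ℕ → ℝ → ℝ := fun k θ => ((ρ * G k θ).trace).re with hLk
  have hLkd : ∀ k θ, HasDerivAt (Lk k) (Lk (k+1) θ) θ := fun k θ => hTd _ _ θ (hGd k θ)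
  have hLkcont : ∀ k, Continuous (Lk k) :=
    fun k => continuous_iff_continuousAt.mpr fun θ => (hLkd k θ).continuousAt
  have hLfun : L = Lk 0 := funext fun θ => by
    rw [hL θ, hgUV θ]; rfl
  have hU0 : U 0 = 1 := by
    rw [hU]; simp only [Complex.ofReal_zero, zero_smul, NormedSpace.exp_zero]
  have hV0 : V 0 = 1 := by
    rw [hV]; simp only [neg_zero, Complex.ofReal_zero, zero_smul, NormedSpace.exp_zero]
  have hG0 : ∀ k, G k 0 = Dk k := by
    intro k; rw [hG]; simp only [hU0, hV0, one_mul, mul_one]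
  have hgG : g = G 0 := funext fun θ => by rw [hgUV θ]; rfl
  have hIter : iteratedDeriv 2 g 0 = Dk 2 := by
    have h1 : deriv g = G 1 := funext fun θ => by rw [hgG]; exact (hGd 0 θ).deriv
    have h2 : iteratedDeriv 2 g 0 = deriv (deriv g) 0 := by
      rw [iteratedDeriv_succ, iteratedDeriv_one]
    rw [h2, h1, (hGd 1 0).deriv, hG0 2]
  have hnormDk : ∀ k, ‖Dk k‖ ≤ NO * (2 * (s:ℝ)) ^ k := by
    intro k
    have hthis := stmt11_ad_pow_bound h hcomm hnorm H hHdef P hPnorm O hOdef hca s hs k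
    rw [hDk]
    exact hthis
  have hLkb : ∀ k θ, |Lk k θ| ≤ NO * (2 * (s:ℝ)) ^ k := by
    intro k θ
    calc |Lk k θ| ≤ ‖G k θ‖ := stmt11_trace_re_bound ρ (G k θ) hρ hρtr
      _ ≤ ‖Dk k‖ := stmt11_norm_conj_le B hBstar (Dk k) θ
      _ ≤ NO * (2 * (s:ℝ)) ^ k := hnormDk k
  -- Taylor expansion setup
  set c0 := Lk 0 0 with hc0
  set c1 := Lk 1 0 with hc1
  set c2 := Lk 2 0 with hc2
  set c3 := Lk 3 0 with hc3
  set c4 := Lk 4 0 with hc4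
  set c5 := Lk 5 0 with hc5
  set pp := stmt11_pp c0 c1 c2 c3 c4 c5 with hpp
  set C6 : ℝ := NO * (2 * (s:ℝ)) ^ 6 with hC6
  have hC6nn : (0:ℝ) ≤ C6 := by rw [hC6]; positivity
  set F : ℕ → ℝ → ℝ := fun k θ => Lk k θ - pp k θ with hF
  have hFd : ∀ k < 6, ∀ t, HasDerivAt (F k) (F (k+1) t) t := by
    intro k hk t
    exact (hLkd k t).sub (stmt11_pp_hasDerivAt c0 c1 c2 c3 c4 c5 k hk t)
  have hF0 : ∀ k < 6, F k 0 = 0 := by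
    intro k hk
    have hppk : pp k 0 = Lk k 0 := by
      rw [hpp]
      interval_cases k <;>
        simp [stmt11_pp, stmt11_quintic, hc0, hc1, hc2, hc3, hc4, hc5]
    simp only [hF]
    rw [hppk, sub_self]
  have hFcont : Continuous (F 6) := by
    simp only [hF]
    exact (hLkcont 6).sub (by
      rw [hpp]
      exact stmt11_quintic_continuous 0 0 0 0 0 0)
  have hFb : ∀ t, |t| ≤ r → |F 6 t| ≤ C6 := by
    intro t ht
    have h1 : pp 6 t = 0 := by
      rw [hpp]
      show stmt11_quintic 0 0 0 0 0 0 t = 0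
      norm_num [stmt11_quintic]
    simp only [hF]
    rw [h1, sub_zero, hC6]
    exact hLkb 6 t
  have hTaylor : ∀ t, |t| ≤ r → |Lk 0 t - pp 0 t| ≤ C6 * |t|^6 / 720 := by
    intro t ht
    have hT := stmt11_taylor_sym r C6 hC6nn 6 F hFd hF0 hFcont hFb t ht
    have h720 : ((Nat.factorial 6 : ℕ) : ℝ) = 720 := by norm_num [Nat.factorial]
    rw [h720] at hT
    simpa only [hF] using hT
  -- the weight function
  set φf : ℝ → ℝ := fun θ => θ^2 - r^2/3 with hφf
  have hφcont : Continuous φf := by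
    rw [hφf]; exact (continuous_pow 2).sub continuous_const
  have hφ0 : ∫ θ in (-r)..r, φf θ = 0 := by
    have e : Set.EqOn (fun θ => φf θ) (fun θ : ℝ => (-(r^2/3)) + 0*θ^1 + 1*θ^2 + 0*θ^3 +
        0*θ^4 + 0*θ^5 + 0*θ^6 + 0*θ^7 + 0*θ^8) (Set.uIcc (-r) r) := by
      intro θ _; simp only [hφf]; ring
    rw [intervalIntegral.integral_congr e, stmt11_integral_poly8]
    ring
  have hφ2 : ∫ θ in (-r)..r, (φf θ)^2 = 8*r^5/45 := by
    have e : Set.EqOn (fun θ => (φf θ)^2) (fun θ : ℝ => (r^4/9) + 0*θ^1 + (-(2*r^2/3))*θ^2 +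
        0*θ^3 + 1*θ^4 + 0*θ^5 + 0*θ^6 + 0*θ^7 + 0*θ^8) (Set.uIcc (-r) r) := by
      intro θ _; simp only [hφf]; ring
    rw [intervalIntegral.integral_congr e, stmt11_integral_poly8]
    ring
  have hvar := stmt11_var_lower r hr (Lk 0) φf (hLkcont 0) hφcont hφ0
    (by rw [hφ2]; positivity)
  -- split the covariance integral
  have hpp0cont : Continuous (pp 0) := by
    rw [hpp]; exact stmt11_quintic_continuous _ _ _ _ _ _
  set Cc := ∫ θ in (-r)..r, Lk 0 θ * φf θ with hCc
  set Er := ∫ θ in (-r)..r, (Lk 0 θ - pp 0 θ) * φf θ with hEr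
  have hsplit : Cc = (∫ θ in (-r)..r, pp 0 θ * φf θ) + Er := by
    rw [hCc, hEr, ← intervalIntegral.integral_add (f := fun θ => pp 0 θ * φf θ)
      (g := fun θ => (Lk 0 θ - pp 0 θ) * φf θ)
      ((hpp0cont.mul hφcont).intervalIntegrable _ _)
      ((((hLkcont 0).sub hpp0cont).mul hφcont).intervalIntegrable _ _)]
    apply intervalIntegral.integral_congr
    intro θ _; ring
  have h1int : (∫ θ in (-r)..r, pp 0 θ * φf θ) = 4*c2*r^5/45 + 2*c4*r^7/315 := by
    have e : Set.EqOn (fun θ => pp 0 θ * φf θ) (fun θ : ℝ =>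
        (-(c0*(r^2/3))) + (-(c1*(r^2/3)))*θ^1 + (c0 - (c2/2)*(r^2/3))*θ^2 +
        (c1 - (c3/6)*(r^2/3))*θ^3 + (c2/2 - (c4/24)*(r^2/3))*θ^4 +
        (c3/6 - (c5/120)*(r^2/3))*θ^5 + (c4/24)*θ^6 + (c5/120)*θ^7 + 0*θ^8)
        (Set.uIcc (-r) r) := by
      intro θ _
      simp only [hpp, hφf, stmt11_pp, stmt11_quintic]
      ring
    rw [intervalIntegral.integral_congr e, stmt11_integral_poly8]
    ring
  have h2int : |Er| ≤ C6*r^9/2268 := by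
    have hb1 : ∀ u ∈ Set.Icc (-r) r, |(Lk 0 u - pp 0 u) * φf u|
        ≤ (C6/720) * (u^6*(u^2 + r^2/3)) := by
      intro u hu
      have hu' : |u| ≤ r := abs_le.mpr ⟨hu.1, hu.2⟩
      have hR := hTaylor u hu'
      have habs : |u|^6 = u^6 := by rw [← abs_pow]; exact abs_of_nonneg (by positivity)
      rw [habs] at hR
      have hφu : |φf u| ≤ u^2 + r^2/3 := by
        simp only [hφf]
        calc |u^2 - r^2/3| ≤ |u^2| + |r^2/3| := abs_sub _ _
          _ = u^2 + r^2/3 := by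
              rw [abs_of_nonneg (sq_nonneg u), abs_of_nonneg (by positivity)]
      calc |(Lk 0 u - pp 0 u) * φf u| = |Lk 0 u - pp 0 u| * |φf u| := abs_mul _ _
        _ ≤ (C6 * u^6/720) * (u^2 + r^2/3) := by
            apply mul_le_mul hR hφu (abs_nonneg _)
            positivity
        _ = (C6/720) * (u^6*(u^2 + r^2/3)) := by ring
    have hRcont : Continuous (fun θ => (Lk 0 θ - pp 0 θ) * φf θ) :=
      ((hLkcont 0).sub hpp0cont).mul hφcont
    have hbcont : Continuous (fun u : ℝ => (C6/720) * (u^6*(u^2 + r^2/3))) :=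
      continuous_const.mul ((continuous_pow 6).mul ((continuous_pow 2).add continuous_const))
    calc |Er| ≤ ∫ θ in (-r)..r, |(Lk 0 θ - pp 0 θ) * φf θ| := by
          rw [hEr]
          exact intervalIntegral.abs_integral_le_integral_abs (by linarith)
      _ ≤ ∫ θ in (-r)..r, (C6/720) * (θ^6*(θ^2 + r^2/3)) := by
          apply intervalIntegral.integral_mono_on (by linarith)
            (hRcont.abs.intervalIntegrable _ _) (hbcont.intervalIntegrable _ _) hb1
      _ = C6*r^9/2268 := by
          have e : Set.EqOn (fun θ : ℝ => (C6/720) * (θ^6*(θ^2 + r^2/3)))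
              (fun θ : ℝ => 0 + 0*θ^1 + 0*θ^2 + 0*θ^3 + 0*θ^4 + 0*θ^5 +
                ((C6/720)*(r^2/3))*θ^6 + 0*θ^7 + (C6/720)*θ^8) (Set.uIcc (-r) r) := by
            intro θ _; ring
          rw [intervalIntegral.integral_congr e, stmt11_integral_poly8]
          ring
  -- numeric bounds
  have hsn : (0:ℝ) ≤ (s:ℝ) := Nat.cast_nonneg s
  have hNn : (0:ℝ) ≤ (NO:ℝ) := Nat.cast_nonneg NO
  have hc2b : |c2| ≤ 4*NO*(s:ℝ)^2 := by
    have hx := hLkb 2 0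
    rw [← hc2] at hx
    calc |c2| ≤ NO * (2 * (s:ℝ))^2 := hx
      _ = 4*NO*(s:ℝ)^2 := by ring
  have hc4b : |c4| ≤ 16*NO*(s:ℝ)^4 := by
    have hx := hLkb 4 0
    rw [← hc4] at hx
    calc |c4| ≤ NO * (2 * (s:ℝ))^4 := hx
      _ = 16*NO*(s:ℝ)^4 := by ring
  have hC6e : C6 = 64*NO*(s:ℝ)^6 := by rw [hC6]; ring
  have hs2r2 : (s:ℝ)^2*r^2 ≤ 9/16 := by
    have hsr : (s:ℝ)*r ≤ 3/4 := by linarith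
    have hsrnn : (0:ℝ) ≤ (s:ℝ)*r := by positivity
    have hmul := mul_self_le_mul_self hsrnn hsr
    have e : (s:ℝ)^2*r^2 = ((s:ℝ)*r)*((s:ℝ)*r) := by ring
    rw [e]
    linarith [hmul]
  have hErb : |2*c4*r^7/315 + Er| ≤ (37/315)*NO*(s:ℝ)^4*r^7 := by
    have t0 : 2*c4*r^7/315 = (2*r^7/315)*c4 := by ring
    have t1 : |2*c4*r^7/315| = (2*r^7/315)*|c4| := by
      rw [t0, abs_mul, abs_of_nonneg (by positivity : (0:ℝ) ≤ 2*r^7/315)]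
    have step1 : |2*c4*r^7/315 + Er| ≤ (2*r^7/315)*|c4| + |Er| := by
      calc |2*c4*r^7/315 + Er| ≤ |2*c4*r^7/315| + |Er| := abs_add_le _ _
        _ = (2*r^7/315)*|c4| + |Er| := by rw [t1]
    have step2 : (2*r^7/315)*|c4| ≤ (32/315)*NO*(s:ℝ)^4*r^7 := by
      have := mul_le_mul_of_nonneg_left hc4b (by positivity : (0:ℝ) ≤ 2*r^7/315)
      calc (2*r^7/315)*|c4| ≤ (2*r^7/315)*(16*NO*(s:ℝ)^4) := this
        _ = (32/315)*NO*(s:ℝ)^4*r^7 := by ring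
    have step3 : C6*r^9/2268 ≤ (5/315)*NO*(s:ℝ)^4*r^7 := by
      rw [hC6e]
      have hkey := mul_le_mul_of_nonneg_left hs2r2
        (by positivity : (0:ℝ) ≤ (64/2268)*NO*(s:ℝ)^4*r^7)
      have e1 : 64*NO*(s:ℝ)^6*r^9/2268 = (64/2268)*NO*(s:ℝ)^4*r^7*((s:ℝ)^2*r^2) := by ring
      have e2 : (64/2268)*NO*(s:ℝ)^4*r^7*(9/16) = (5/315)*NO*(s:ℝ)^4*r^7 := by ring
      linarith [hkey, e1, e2]
    linarith [step1, step2, step3, h2int]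
  -- final computation
  rw [hLfun, hIter]
  have hX0 : ((ρ * Dk 2).trace).re = c2 := by
    rw [hc2, hLk]
    simp only
    rw [hG0 2]
  rw [hX0]
  have hfinal : Cc^2/(2*r*(8*r^5/45)) ≥ (r^4/45)*c2^2 - (32*(NO:ℝ)^2*(s:ℝ)^6/135)*r^6 := by
    rw [ge_iff_le, le_div_iff₀ (by positivity)]
    set a' := 4*c2*r^5/45 with ha'
    set E := 2*c4*r^7/315 + Er with hE
    have hCsum : Cc = a' + E := by
      rw [hsplit, h1int, ha', hE]; ring
    have haE : a'*E ≥ -(|a'| * |E|) := by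
      have hna := neg_abs_le (a'*E)
      rw [abs_mul] at hna
      linarith
    have ha'b : |a'| ≤ (16/45)*NO*(s:ℝ)^2*r^5 := by
      rw [ha', show 4*c2*r^5/45 = (4*r^5/45)*c2 from by ring, abs_mul,
        abs_of_nonneg (by positivity : (0:ℝ) ≤ 4*r^5/45)]
      have := mul_le_mul_of_nonneg_left hc2b (by positivity : (0:ℝ) ≤ 4*r^5/45)
      calc (4*r^5/45)*|c2| ≤ (4*r^5/45)*(4*NO*(s:ℝ)^2) := this
        _ = (16/45)*NO*(s:ℝ)^2*r^5 := by ring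
    have hprod : |a'| * |E| ≤ (592/14175)*((NO:ℝ)^2*(s:ℝ)^6*r^12) := by
      have h0 := mul_le_mul ha'b hErb (abs_nonneg _) (by positivity)
      calc |a'| * |E| ≤ ((16/45)*NO*(s:ℝ)^2*r^5)*((37/315)*NO*(s:ℝ)^4*r^7) := h0
        _ = (592/14175)*((NO:ℝ)^2*(s:ℝ)^6*r^12) := by ring
    have hsq : Cc^2 = a'^2 + 2*(a'*E) + E^2 := by rw [hCsum]; ring
    have hM : (0:ℝ) ≤ (NO:ℝ)^2*(s:ℝ)^6*r^12 := by positivity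
    have hLHSeq : ((r^4/45)*c2^2 - (32*(NO:ℝ)^2*(s:ℝ)^6/135)*r^6) * (2*r*(8*r^5/45))
        = a'^2 - (512/6075)*((NO:ℝ)^2*(s:ℝ)^6*r^12) := by
      rw [ha']; ring
    rw [hLHSeq]
    linarith [hsq, haE, hprod, hM, sq_nonneg E]
  have hvar2 : (1 / (2 * r)) * (∫ θ in (-r)..r, (Lk 0 θ) ^ 2) -
      ((1 / (2 * r)) * ∫ θ in (-r)..r, Lk 0 θ) ^ 2 ≥ Cc^2/(2*r*(8*r^5/45)) := by
    have := hvar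
    rw [hφ2] at this
    rw [hCc]
    exact this
  exact ge_trans hvar2 hfinal
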